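/- Let n ≥ 1 and let κ₁ ≤ κ₂ ≤ … ≤ κₙ be real numbers with κₙ > 0, and set H = κ₁ + … + κₙ. Assume H > 0. Then ∫₀^{1/κₙ} ∏_{i=1}^n (1 − t κᵢ) dt ≤ n / ((n+1) H), and equality holds if and only if κ₁ = κ₂ = … = κₙ (= H/n). -/

import Mathlib

open Finset

private lemma amgm {n : ℕ} (hn : 0 < n) (z : Fin n → ℝ) (hz : ∀ i, 0 ≤ z i) :
    ∏ i, z i ≤ ((∑ i, z i) / n) ^ n := by
  have hnR : (0:ℝ) < n := by exact_mod_cast hn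
  have hw : ∑ _i : Fin n, (1 / n : ℝ) = 1 := by
    rw [Finset.sum_const, card_univ, Fintype.card_fin, nsmul_eq_mul]
    field_simp
  have h := Real.geom_mean_le_arith_mean_weighted Finset.univ (fun _ => (1/n : ℝ)) z
      (fun i _ => by positivity) hw (fun i _ => hz i)
  have key : (∏ i, z i) = (∏ i, z i ^ (1/n : ℝ)) ^ n := by
    rw [← Finset.prod_pow]
    refine Finset.prod_congr rfl fun i _ => ?_
    rw [← Real.rpow_natCast (z i ^ (1/n : ℝ)) n, ← Real.rpow_mul (hz i)]
    rw [one_div, inv_mul_cancel₀ (by positivity : (n:ℝ) ≠ 0), Real.rpow_one]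
  rw [key]
  have hRHS : ∑ i : Fin n, (1/n : ℝ) * z i = (∑ i, z i) / n := by
    rw [← Finset.mul_sum]; ring
  rw [hRHS] at h
  exact pow_le_pow_left₀ (Finset.prod_nonneg fun i _ => Real.rpow_nonneg (hz i) _) h n

private lemma integ (n : ℕ) {c : ℝ} (hc : c ≠ 0) (a b : ℝ) :
    ∫ t in a..b, (1 - t*c)^n
      = (1 - a*c)^(n+1) / ((n+1)*c) - (1 - b*c)^(n+1) / ((n+1)*c) := by
  have hF : ∀ t : ℝ, HasDerivAt (fun t => -((1 - t*c)^(n+1) / ((n+1)*c))) ((1 - t*c)^n) t := by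
    intro t
    have h1 : HasDerivAt (fun t : ℝ => 1 - t*c) (-c) t := by
      simpa using ((hasDerivAt_id t).mul_const c).const_sub 1
    have h2 := ((h1.pow (n+1)).div_const (((n:ℝ)+1)*c)).neg
    refine h2.congr_deriv ?_
    have hn1 : ((n:ℝ)+1) ≠ 0 := by positivity
    rw [Nat.add_sub_cancel]; push_cast
    field_simp
  rw [intervalIntegral.integral_eq_sub_of_hasDerivAt (fun t _ => hF t)
      ((by continuity : Continuous fun t : ℝ => (1 - t*c)^n).intervalIntegrable a b)]
  ring

theorem stmt_19 (n : ℕ) (hn : 1 ≤ n) (κ : Fin n → ℝ) (hmono : Monotone κ)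
    (hκn : 0 < κ ⟨n - 1, by omega⟩) (hH : 0 < ∑ i, κ i) :
    (∫ t in (0 : ℝ)..(κ ⟨n - 1, by omega⟩)⁻¹, ∏ i, (1 - t * κ i)) ≤
      n / ((n + 1) * ∑ i, κ i) ∧
    ((∫ t in (0 : ℝ)..(κ ⟨n - 1, by omega⟩)⁻¹, ∏ i, (1 - t * κ i)) =
        n / ((n + 1) * ∑ i, κ i) ↔ ∀ i j, κ i = κ j) := by
  have hnR : (0:ℝ) < n := by exact_mod_cast hn
  set i0 : Fin n := ⟨n - 1, by omega⟩ with hi0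
  set M : ℝ := κ i0 with hMdef
  set H : ℝ := ∑ i, κ i with hHdef
  have hM0 : 0 < M := hκn
  have hle : ∀ i, κ i ≤ M := by
    intro i
    refine hmono ?_
    have := i.isLt
    rw [Fin.le_def]
    simp only [hi0]
    omega
  set c : ℝ := H / n with hc
  have hc0 : 0 < c := div_pos hH hnR
  have hcM : c ≤ M := by
    rw [hc, div_le_iff₀ hnR]
    calc H = ∑ i, κ i := rfl
      _ ≤ ∑ _i : Fin n, M := Finset.sum_le_sum fun i _ => hle i
      _ = M * n := by rw [Finset.sum_const, card_univ, Fintype.card_fin, nsmul_eq_mul]; ring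
  -- pointwise AM-GM bound
  have hpt : ∀ t ∈ Set.Icc (0:ℝ) M⁻¹, (∏ i, (1 - t * κ i)) ≤ (1 - t*c)^n := by
    intro t ht
    have hz : ∀ i, 0 ≤ 1 - t * κ i := by
      intro i
      have h1 : t * κ i ≤ t * M := mul_le_mul_of_nonneg_left (hle i) ht.1
      have h2 : t * M ≤ 1 := by
        calc t * M ≤ M⁻¹ * M := mul_le_mul_of_nonneg_right ht.2 hM0.le
          _ = 1 := inv_mul_cancel₀ hM0.ne'
      linarith
    have h := amgm (by omega) (fun i => 1 - t * κ i) hz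
    have hsum : (∑ i : Fin n, (1 - t * κ i)) / n = 1 - t * c := by
      rw [Finset.sum_sub_distrib, Finset.sum_const, card_univ, Fintype.card_fin,
        ← Finset.mul_sum, ← hHdef, nsmul_eq_mul, mul_one, hc]
      field_simp
    rwa [hsum] at h
  have hfc : Continuous fun t : ℝ => ∏ i, (1 - t * κ i) :=
    continuous_finset_prod _ fun i _ => by continuity
  have hgc : Continuous fun t : ℝ => (1 - t*c)^n := by continuity
  have hI1 : (∫ t in (0:ℝ)..c⁻¹, (1 - t*c)^n) = n / ((n+1)*H) := by
    rw [integ n hc0.ne']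
    rw [show (1 - c⁻¹*c) = 0 by field_simp; ring]
    rw [zero_pow (by omega : n + 1 ≠ 0)]
    rw [hc]
    have hn1 : ((n:ℝ)+1) ≠ 0 := by positivity
    field_simp
    simp [hnR.ne']
  have hmono_int : (∫ t in (0:ℝ)..M⁻¹, ∏ i, (1 - t * κ i)) ≤ ∫ t in (0:ℝ)..M⁻¹, (1 - t*c)^n :=
    intervalIntegral.integral_mono_on (inv_nonneg.mpr hM0.le)
      (hfc.intervalIntegrable _ _) (hgc.intervalIntegrable _ _) hpt
  have hMc : M⁻¹ ≤ c⁻¹ := inv_anti₀ hc0 hcM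
  have hsplit : (∫ t in (0:ℝ)..M⁻¹, (1 - t*c)^n) + (∫ t in M⁻¹..c⁻¹, (1 - t*c)^n)
      = ∫ t in (0:ℝ)..c⁻¹, (1 - t*c)^n :=
    intervalIntegral.integral_add_adjacent_intervals
      (hgc.intervalIntegrable _ _) (hgc.intervalIntegrable _ _)
  have htail0 : 0 ≤ ∫ t in M⁻¹..c⁻¹, (1 - t*c)^n := by
    refine intervalIntegral.integral_nonneg hMc fun u hu => ?_
    have : u * c ≤ 1 := by
      calc u * c ≤ c⁻¹ * c := mul_le_mul_of_nonneg_right hu.2 hc0.le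
        _ = 1 := inv_mul_cancel₀ hc0.ne'
    exact pow_nonneg (by linarith) n
  have hmain : (∫ t in (0:ℝ)..M⁻¹, ∏ i, (1 - t * κ i)) ≤ n / ((n+1)*H) := by
    rw [← hI1, ← hsplit]; linarith
  refine ⟨hmain, ?_, ?_⟩
  · intro heq
    by_contra hne
    push_neg at hne
    obtain ⟨i, j, hij⟩ := hne
    have hex : ∃ k, κ k < M := by
      by_contra h'
      push_neg at h'
      exact hij (by rw [le_antisymm (hle i) (h' i), le_antisymm (hle j) (h' j)])
    have hcM' : c < M := by
      rw [hc, div_lt_iff₀ hnR]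
      obtain ⟨k, hk⟩ := hex
      calc H = ∑ i, κ i := rfl
        _ < ∑ _i : Fin n, M := Finset.sum_lt_sum (fun i _ => hle i) ⟨k, Finset.mem_univ k, hk⟩
        _ = M * n := by rw [Finset.sum_const, card_univ, Fintype.card_fin, nsmul_eq_mul]; ring
    have hlt : M⁻¹ < c⁻¹ := by
      rw [inv_lt_inv₀ hM0 hc0]; exact hcM'
    have hpos : 0 < ∫ t in M⁻¹..c⁻¹, (1 - t*c)^n := by
      refine intervalIntegral.intervalIntegral_pos_of_pos_on
        (hgc.intervalIntegrable _ _) (fun x hx => ?_) hlt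
      have : x * c < 1 := by
        have := hx.2
        calc x * c < c⁻¹ * c := by
              exact mul_lt_mul_of_pos_right hx.2 hc0
          _ = 1 := inv_mul_cancel₀ hc0.ne'
      exact pow_pos (by linarith) n
    rw [← hI1, ← hsplit] at heq
    linarith
  · intro hall
    have hall' : ∀ i, κ i = M := fun i => hall i i0
    have hHM : H = M * n := by
      rw [hHdef]
      rw [Finset.sum_congr rfl fun i _ => hall' i]
      rw [Finset.sum_const, card_univ, Fintype.card_fin, nsmul_eq_mul]; ring
    have hcMeq : c = M := by rw [hc, hHM]; field_simp
    have hprod : ∀ t : ℝ, ∏ i, (1 - t * κ i) = (1 - t*M)^n := by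
      intro t
      rw [Finset.prod_congr rfl fun i _ => by rw [hall' i],
        Finset.prod_const, card_univ, Fintype.card_fin]
    rw [intervalIntegral.integral_congr (g := fun t => (1 - t*M)^n) fun t _ => hprod t]
    rw [← hcMeq]
    exact hI1
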